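/- For every F ∈ h𝔽 = {F ∈ 𝔽 : F₁(F) = F₂(F) = 0}, the forms F₉(F), F₁₀(F), F₁₁(F) and F₁₂(F) are again elements of h𝔽. -/

import Mathlib

open scoped BigOperators RealInnerProductSpace

noncomputable section

variable {V : Type*} [NormedAddCommGroup V] [InnerProductSpace ℝ V]

/-- A map `V → V → V → ℝ` linear in each of its three arguments. -/
def Trilinear (F : V → V → V → ℝ) : Prop :=
  (∀ y z, IsLinearMap ℝ fun x => F x y z) ∧
  (∀ x z, IsLinearMap ℝ fun y => F x y z) ∧
  (∀ x y, IsLinearMap ℝ fun z => F x y z)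

/-- Almost contact metric structure `(φ, ξ, η, g)` on `V` with `dim V = 2n+1`. -/
def ACM (n : ℕ) (φ : V →ₗ[ℝ] V) (ξ : V) (η : V →ₗ[ℝ] ℝ) : Prop :=
  Module.finrank ℝ V = 2 * n + 1 ∧
  (∀ x, φ (φ x) = -x + η x • ξ) ∧
  φ ξ = 0 ∧
  (∀ x, η (φ x) = 0) ∧
  ⟪ξ, ξ⟫ = 1 ∧
  (∀ x y, ⟪φ x, φ y⟫ = ⟪x, y⟫ - η x * η y)

/-- Membership in the space `𝔽` of trilinear forms with the symmetries (1). -/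
def InF (φ : V →ₗ[ℝ] V) (ξ : V) (η : V →ₗ[ℝ] ℝ) (F : V → V → V → ℝ) : Prop :=
  Trilinear F ∧
  (∀ x y z, F x y z = -F x z y) ∧
  (∀ x y z, F x y z = -F x (φ y) (φ z) + η y * F x ξ z + η z * F x y ξ)

/-- `h x = -φ²x`. -/
def hMap (φ : V →ₗ[ℝ] V) (x : V) : V := -φ (φ x)

/-- `hF(x,y,z) = F(hx,hy,hz)`. -/
def hF (φ : V →ₗ[ℝ] V) (F : V → V → V → ℝ) : V → V → V → ℝ :=
  fun x y z => F (hMap φ x) (hMap φ y) (hMap φ z)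

def F1 (ξ : V) (η : V →ₗ[ℝ] ℝ) (F : V → V → V → ℝ) : V → V → V → ℝ :=
  fun x y z => η x * F ξ y z

def F2 (ξ : V) (η : V →ₗ[ℝ] ℝ) (F : V → V → V → ℝ) : V → V → V → ℝ :=
  fun x y z => η y * F x ξ z - η z * F x ξ y

def F3 (ξ : V) (η : V →ₗ[ℝ] ℝ) (F : V → V → V → ℝ) : V → V → V → ℝ :=
  fun x y z => η x * η y * F ξ ξ z - η x * η z * F ξ ξ y

def F4 (φ : V →ₗ[ℝ] V) (ξ : V) (η : V →ₗ[ℝ] ℝ) (F : V → V → V → ℝ) : V → V → V → ℝ :=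
  fun x y z => η y * F (φ x) ξ (φ z) - η z * F (φ x) ξ (φ y)

def F5 (ξ : V) (η : V →ₗ[ℝ] ℝ) (F : V → V → V → ℝ) : V → V → V → ℝ :=
  fun x y z => η y * F z ξ x - η z * F y ξ x

def F6 (φ : V →ₗ[ℝ] V) (ξ : V) (η : V →ₗ[ℝ] ℝ) (F : V → V → V → ℝ) : V → V → V → ℝ :=
  fun x y z => η y * F (φ z) ξ (φ x) - η z * F (φ y) ξ (φ x)

/-- `f(F)(z) = Σᵢ F(eᵢ, eᵢ, z)`. -/
def fTr {ι : Type*} [Fintype ι] (e : OrthonormalBasis ι ℝ V) (F : V → V → V → ℝ) (z : V) : ℝ :=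
  ∑ i, F (e i) (e i) z

/-- `f*(F)(z) = Σᵢ F(eᵢ, φ eᵢ, z)`. -/
def fTrStar {ι : Type*} [Fintype ι] (φ : V →ₗ[ℝ] V) (e : OrthonormalBasis ι ℝ V)
    (F : V → V → V → ℝ) (z : V) : ℝ :=
  ∑ i, F (e i) (φ (e i)) z

/-- The inner product on `𝔽`: `⟨F,G⟩ = Σ_{i,j,k} F(eᵢ,eⱼ,e_k) G(eᵢ,eⱼ,e_k)`. -/
def innerF {ι : Type*} [Fintype ι] (e : OrthonormalBasis ι ℝ V) (F G : V → V → V → ℝ) : ℝ :=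
  ∑ i, ∑ j, ∑ k, F (e i) (e j) (e k) * G (e i) (e j) (e k)

def F7 (n : ℕ) {ι : Type*} [Fintype ι] (e : OrthonormalBasis ι ℝ V) (ξ : V) (η : V →ₗ[ℝ] ℝ)
    (F : V → V → V → ℝ) : V → V → V → ℝ :=
  fun x y z => (1 / (2 * (n : ℝ))) * fTr e F ξ * (η z * ⟪x, y⟫ - η y * ⟪x, z⟫)

def F8 (n : ℕ) (φ : V →ₗ[ℝ] V) {ι : Type*} [Fintype ι] (e : OrthonormalBasis ι ℝ V) (ξ : V)
    (η : V →ₗ[ℝ] ℝ) (F : V → V → V → ℝ) : V → V → V → ℝ :=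
  fun x y z => -(1 / (2 * (n : ℝ))) * fTrStar φ e F ξ * (η z * ⟪x, φ y⟫ - η y * ⟪x, φ z⟫)

def F9 (n : ℕ) (φ : V →ₗ[ℝ] V) {ι : Type*} [Fintype ι] (e : OrthonormalBasis ι ℝ V)
    (F : V → V → V → ℝ) : V → V → V → ℝ :=
  fun x y z => (1 / (2 * ((n : ℝ) - 1))) *
    (⟪hMap φ x, hMap φ y⟫ * fTr e F z - ⟪hMap φ x, hMap φ z⟫ * fTr e F y
      - ⟪x, φ y⟫ * fTr e F (φ z) + ⟪x, φ z⟫ * fTr e F (φ y))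

def F10 (φ : V →ₗ[ℝ] V) (F : V → V → V → ℝ) : V → V → V → ℝ :=
  fun x y z => (1 / 2) * (F x y z + F (φ x) (φ y) z)

def F11 (φ : V →ₗ[ℝ] V) (F : V → V → V → ℝ) : V → V → V → ℝ :=
  fun x y z => (1 / 6) * (F x y z + F y z x + F z x y
    - F (φ x) (φ y) z - F (φ y) (φ z) x - F (φ z) (φ x) y)

def F12 (φ : V →ₗ[ℝ] V) (F : V → V → V → ℝ) : V → V → V → ℝ :=
  fun x y z => (1 / 2) * (F x y z - F (φ x) (φ y) z)

/-- The action of a linear isometry `A` of `V` on trilinear forms: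
`(A·F)(x,y,z) = F(A⁻¹x, A⁻¹y, A⁻¹z)`. -/
def actA (A : V ≃ₗᵢ[ℝ] V) (F : V → V → V → ℝ) : V → V → V → ℝ :=
  fun x y z => F (A.symm x) (A.symm y) (A.symm z)

def L1 (ξ : V) (η : V →ₗ[ℝ] ℝ) (F : V → V → V → ℝ) : V → V → V → ℝ :=
  fun x y z => F x y z - 2 * F3 ξ η F x y z

def L2 (ξ : V) (η : V →ₗ[ℝ] ℝ) (F : V → V → V → ℝ) : V → V → V → ℝ :=
  fun x y z => F x y z - 2 * (F1 ξ η F x y z + F2 ξ η F x y z)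

def L3 (ξ : V) (η : V →ₗ[ℝ] ℝ) (F : V → V → V → ℝ) : V → V → V → ℝ :=
  fun x y z => F2 ξ η F x y z - F1 ξ η F x y z

def L4 (φ : V →ₗ[ℝ] V) (ξ : V) (η : V →ₗ[ℝ] ℝ) (F : V → V → V → ℝ) : V → V → V → ℝ :=
  fun x y z => -F4 φ ξ η F x y z

def L5 (ξ : V) (η : V →ₗ[ℝ] ℝ) (F : V → V → V → ℝ) : V → V → V → ℝ :=
  fun x y z => -F5 ξ η F x y z

def L6 (n : ℕ) {ι : Type*} [Fintype ι] (e : OrthonormalBasis ι ℝ V) (ξ : V) (η : V →ₗ[ℝ] ℝ)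
    (F : V → V → V → ℝ) : V → V → V → ℝ :=
  fun x y z => F x y z - 2 * F7 n e ξ η F x y z

def L7 (n : ℕ) (φ : V →ₗ[ℝ] V) {ι : Type*} [Fintype ι] (e : OrthonormalBasis ι ℝ V) (ξ : V)
    (η : V →ₗ[ℝ] ℝ) (F : V → V → V → ℝ) : V → V → V → ℝ :=
  fun x y z => F x y z - 2 * F8 n φ e ξ η F x y z

/-- The subspace `𝔽₁ = {F ∈ 𝔽 : F = F₃(F)}`. -/
def MemF1sub (φ : V →ₗ[ℝ] V) (ξ : V) (η : V →ₗ[ℝ] ℝ) (F : V → V → V → ℝ) : Prop :=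
  InF φ ξ η F ∧ F = F3 ξ η F

/-- The subspace `v𝔽 = {F ∈ 𝔽 : hF = 0, ω(F) = 0}`. -/
def MemVF (φ : V →ₗ[ℝ] V) (ξ : V) (η : V →ₗ[ℝ] ℝ) (F : V → V → V → ℝ) : Prop :=
  InF φ ξ η F ∧ hF φ F = 0 ∧ ∀ z, F ξ ξ z = 0

/-- The subspace `h𝔽 = {F ∈ 𝔽 : F₁(F) = F₂(F) = 0}`. -/
def MemHF (φ : V →ₗ[ℝ] V) (ξ : V) (η : V →ₗ[ℝ] ℝ) (F : V → V → V → ℝ) : Prop :=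
  InF φ ξ η F ∧ F1 ξ η F = 0 ∧ F2 ξ η F = 0

/-- The subspace `(v𝔽)′ = {F ∈ 𝔽 : hF = 0, F(ξ,·,·) = 0}`. -/
def MemVF' (φ : V →ₗ[ℝ] V) (ξ : V) (η : V →ₗ[ℝ] ℝ) (F : V → V → V → ℝ) : Prop :=
  InF φ ξ η F ∧ hF φ F = 0 ∧ ∀ y z, F ξ y z = 0

/-- The subspace `𝔽₈ = {F ∈ 𝔽 : hF = 0, F(·,·,ξ) = 0}`. -/
def MemF8sub (φ : V →ₗ[ℝ] V) (ξ : V) (η : V →ₗ[ℝ] ℝ) (F : V → V → V → ℝ) : Prop :=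
  InF φ ξ η F ∧ hF φ F = 0 ∧ ∀ x y, F x y ξ = 0

/-- The subspace `𝒩 = {F ∈ (v𝔽)′ : F = F₄(F)}`. -/
def MemN (φ : V →ₗ[ℝ] V) (ξ : V) (η : V →ₗ[ℝ] ℝ) (F : V → V → V → ℝ) : Prop :=
  MemVF' φ ξ η F ∧ F = F4 φ ξ η F

/-- The subspace `𝒩̃ = {F ∈ (v𝔽)′ : F = -F₄(F)}`. -/
def MemNt (φ : V →ₗ[ℝ] V) (ξ : V) (η : V →ₗ[ℝ] ℝ) (F : V → V → V → ℝ) : Prop :=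
  MemVF' φ ξ η F ∧ F = -F4 φ ξ η F

/-- The subspace `𝒬𝒮𝔽 = {F ∈ (v𝔽)′ : F = F₄(F) = F₅(F)}`. -/
def MemQS (φ : V →ₗ[ℝ] V) (ξ : V) (η : V →ₗ[ℝ] ℝ) (F : V → V → V → ℝ) : Prop :=
  MemVF' φ ξ η F ∧ F = F4 φ ξ η F ∧ F = F5 ξ η F

/-- The subspace `𝒬𝒦𝔽 = {F ∈ (v𝔽)′ : F = F₄(F) = -F₅(F)}`. -/
def MemQK (φ : V →ₗ[ℝ] V) (ξ : V) (η : V →ₗ[ℝ] ℝ) (F : V → V → V → ℝ) : Prop :=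
  MemVF' φ ξ η F ∧ F = F4 φ ξ η F ∧ F = -F5 ξ η F

/-- The subspace `𝔽₆ = {F ∈ (v𝔽)′ : F = -F₄(F) = F₅(F)}`. -/
def MemF6sub (φ : V →ₗ[ℝ] V) (ξ : V) (η : V →ₗ[ℝ] ℝ) (F : V → V → V → ℝ) : Prop :=
  MemVF' φ ξ η F ∧ F = -F4 φ ξ η F ∧ F = F5 ξ η F

/-- The subspace `𝔽₇ = {F ∈ (v𝔽)′ : F = -F₄(F) = -F₅(F)}`. -/
def MemF7sub (φ : V →ₗ[ℝ] V) (ξ : V) (η : V →ₗ[ℝ] ℝ) (F : V → V → V → ℝ) : Prop :=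
  MemVF' φ ξ η F ∧ F = -F4 φ ξ η F ∧ F = -F5 ξ η F

/-- The subspace `𝔽₂ = {F ∈ 𝔽 : F = F₇(F)}`. -/
def MemF2sub (n : ℕ) {ι : Type*} [Fintype ι] (e : OrthonormalBasis ι ℝ V) (φ : V →ₗ[ℝ] V)
    (ξ : V) (η : V →ₗ[ℝ] ℝ) (F : V → V → V → ℝ) : Prop :=
  InF φ ξ η F ∧ F = F7 n e ξ η F

/-- The subspace `𝔽₃ = {F ∈ 𝔽 : F = F₈(F)}`. -/
def MemF3sub (n : ℕ) {ι : Type*} [Fintype ι] (e : OrthonormalBasis ι ℝ V) (φ : V →ₗ[ℝ] V)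
    (ξ : V) (η : V →ₗ[ℝ] ℝ) (F : V → V → V → ℝ) : Prop :=
  InF φ ξ η F ∧ F = F8 n φ e ξ η F

/-- The subspace `𝔽₄ = {F ∈ 𝔽 : F = F₄(F) = F₅(F), f(F)(ξ) = 0}`. -/
def MemF4sub (n : ℕ) {ι : Type*} [Fintype ι] (e : OrthonormalBasis ι ℝ V) (φ : V →ₗ[ℝ] V)
    (ξ : V) (η : V →ₗ[ℝ] ℝ) (F : V → V → V → ℝ) : Prop :=
  InF φ ξ η F ∧ F = F4 φ ξ η F ∧ F = F5 ξ η F ∧ fTr e F ξ = 0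

/-- The subspace `𝔽₅ = {F ∈ 𝔽 : F = F₄(F) = -F₅(F), f*(F)(ξ) = 0}`. -/
def MemF5sub (n : ℕ) {ι : Type*} [Fintype ι] (e : OrthonormalBasis ι ℝ V) (φ : V →ₗ[ℝ] V)
    (ξ : V) (η : V →ₗ[ℝ] ℝ) (F : V → V → V → ℝ) : Prop :=
  InF φ ξ η F ∧ F = F4 φ ξ η F ∧ F = -F5 ξ η F ∧ fTrStar φ e F ξ = 0

/-- The subspace `𝔽₄ = {F ∈ (v𝔽)′ : F = F₄(F) = F₅(F), f(F)(ξ) = 0}`. -/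
def MemF4sub' (n : ℕ) {ι : Type*} [Fintype ι] (e : OrthonormalBasis ι ℝ V) (φ : V →ₗ[ℝ] V)
    (ξ : V) (η : V →ₗ[ℝ] ℝ) (F : V → V → V → ℝ) : Prop :=
  MemVF' φ ξ η F ∧ F = F4 φ ξ η F ∧ F = F5 ξ η F ∧ fTr e F ξ = 0

/-- The subspace `𝔽₅ = {F ∈ (v𝔽)′ : F = F₄(F) = -F₅(F), f*(F)(ξ) = 0}`. -/
def MemF5sub' (n : ℕ) {ι : Type*} [Fintype ι] (e : OrthonormalBasis ι ℝ V) (φ : V →ₗ[ℝ] V)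
    (ξ : V) (η : V →ₗ[ℝ] ℝ) (F : V → V → V → ℝ) : Prop :=
  MemVF' φ ξ η F ∧ F = F4 φ ξ η F ∧ F = -F5 ξ η F ∧ fTrStar φ e F ξ = 0

/-- The subspace `𝔽₉ = {F ∈ 𝔽 : F = hF = F₉(F)}`. -/
def MemF9sub (n : ℕ) {ι : Type*} [Fintype ι] (e : OrthonormalBasis ι ℝ V) (φ : V →ₗ[ℝ] V)
    (ξ : V) (η : V →ₗ[ℝ] ℝ) (F : V → V → V → ℝ) : Prop :=
  InF φ ξ η F ∧ F = hF φ F ∧ F = F9 n φ e F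

/-- The subspace `𝔽₁₀ = {F ∈ 𝔽 : F = hF = F₁₀(F) - F₉(F)}`. -/
def MemF10sub (n : ℕ) {ι : Type*} [Fintype ι] (e : OrthonormalBasis ι ℝ V) (φ : V →ₗ[ℝ] V)
    (ξ : V) (η : V →ₗ[ℝ] ℝ) (F : V → V → V → ℝ) : Prop :=
  InF φ ξ η F ∧ F = hF φ F ∧ F = F10 φ F - F9 n φ e F

/-- The subspace `𝔽₁₁ = {F ∈ 𝔽 : F = hF = F₁₁(F)}`. -/
def MemF11sub (φ : V →ₗ[ℝ] V) (ξ : V) (η : V →ₗ[ℝ] ℝ) (F : V → V → V → ℝ) : Prop :=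
  InF φ ξ η F ∧ F = hF φ F ∧ F = F11 φ F

/-- The subspace `𝔽₁₂ = {F ∈ 𝔽 : F = hF = F₁₂(F) - F₁₁(F)}`. -/
def MemF12sub (φ : V →ₗ[ℝ] V) (ξ : V) (η : V →ₗ[ℝ] ℝ) (F : V → V → V → ℝ) : Prop :=
  InF φ ξ η F ∧ F = hF φ F ∧ F = F12 φ F - F11 φ F

theorem stmt17 (n : ℕ) (φ : V →ₗ[ℝ] V) (ξ : V) (η : V →ₗ[ℝ] ℝ)
    (hacm : ACM n φ ξ η) (hn : 2 ≤ n) (e : OrthonormalBasis (Fin (2 * n + 1)) ℝ V)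
    (F : V → V → V → ℝ) (hFmem : MemHF φ ξ η F) :
    MemHF φ ξ η (F9 n φ e F) ∧ MemHF φ ξ η (F10 φ F) ∧
      MemHF φ ξ η (F11 φ F) ∧ MemHF φ ξ η (F12 φ F) := by
  obtain ⟨hdim, hphi2, hphixi, hetaphi, hxixi, hmet⟩ := hacm
  obtain ⟨⟨hTri, hAnti, hRel⟩, hF1, hF2⟩ := hFmem
  obtain ⟨T1, T2, T3⟩ := hTri
  -- η ξ = 1
  have hηξ : η ξ = 1 := by
    have h1 : φ (φ ξ) = -ξ + η ξ • ξ := hphi2 ξ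
    rw [hphixi, map_zero] at h1
    have h2 : (inner ℝ ξ (0:V) : ℝ) = inner ℝ ξ (-ξ + η ξ • ξ) := by rw [h1]
    simp [inner_add_right, real_inner_smul_right, hxixi] at h2
    rw [← real_inner_self_eq_norm_sq, hxixi] at h2
    linarith
  have hηinner : ∀ x : V, η x = ⟪x, ξ⟫ := by
    intro x
    have h := hmet x ξ
    rw [hphixi, inner_zero_right, hηξ, mul_one] at h
    linarith
  -- F vanishes when any slot is ξ
  have hFξ : ∀ y z, F ξ y z = 0 := by
    intro y z
    have h := congrFun (congrFun (congrFun hF1 ξ) y) z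
    simpa [F1, hηξ] using h
  have hFmid : ∀ x z, F x ξ z = 0 := by
    intro x z
    have ha : F x ξ ξ = 0 := by have := hAnti x ξ ξ; linarith
    have h := congrFun (congrFun (congrFun hF2 x) ξ) z
    simpa [F2, hηξ, ha] using h
  have hFlast : ∀ x y, F x y ξ = 0 := by
    intro x y; rw [hAnti x y ξ, hFmid]; ring
  -- linearity helpers
  have l1add : ∀ a b y z, F (a + b) y z = F a y z + F b y z :=
    fun a b y z => (T1 y z).map_add a b
  have l1smul : ∀ (c : ℝ) a y z, F (c • a) y z = c * F a y z := by
    intro c a y z; simpa [smul_eq_mul] using (T1 y z).map_smul c a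
  have l1neg : ∀ a y z, F (-a) y z = -F a y z := fun a y z => (T1 y z).map_neg a
  have l1zero : ∀ y z, F 0 y z = 0 := fun y z => (T1 y z).map_zero
  have l2add : ∀ x a b z, F x (a + b) z = F x a z + F x b z :=
    fun x a b z => (T2 x z).map_add a b
  have l2smul : ∀ x (c : ℝ) a z, F x (c • a) z = c * F x a z := by
    intro x c a z; simpa [smul_eq_mul] using (T2 x z).map_smul c a
  have l2neg : ∀ x a z, F x (-a) z = -F x a z := fun x a z => (T2 x z).map_neg a
  have l2zero : ∀ x z, F x 0 z = 0 := fun x z => (T2 x z).map_zero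
  have l3add : ∀ x y a b, F x y (a + b) = F x y a + F x y b :=
    fun x y a b => (T3 x y).map_add a b
  have l3smul : ∀ x y (c : ℝ) a, F x y (c • a) = c * F x y a := by
    intro x y c a; simpa [smul_eq_mul] using (T3 x y).map_smul c a
  have l3neg : ∀ x y a, F x y (-a) = -F x y a := fun x y a => (T3 x y).map_neg a
  have l3zero : ∀ x y, F x y 0 = 0 := fun x y => (T3 x y).map_zero
  -- key relations
  have hA : ∀ x y z, F x (φ y) (φ z) = -F x y z := by
    intro x y z
    have h1 := hRel x y z
    rw [hFmid x z, hFlast x y] at h1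
    simp at h1
    linarith
  have hB : ∀ a u v, F a (φ u) v = F a u (φ v) := by
    intro a u v
    have h1 := hRel a (φ u) v
    rw [hetaphi, hFlast a (φ u), hphi2 u, l2add, l2neg, l2smul, hFmid] at h1
    simp at h1
    linarith
  -- hMap lemmas
  have hmdef : ∀ x, hMap φ x = x - η x • ξ := by
    intro x; show -φ (φ x) = x - η x • ξ; rw [hphi2 x]; abel
  have hmξ : hMap φ ξ = 0 := by rw [hmdef, hηξ, one_smul, sub_self]
  have hmφ : ∀ y, hMap φ (φ y) = φ y := by
    intro y; show -φ (φ (φ y)) = φ y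
    rw [hphi2 y]; simp [hphixi]
  have hmadd : ∀ a b, hMap φ (a + b) = hMap φ a + hMap φ b := by
    intro a b; show -φ (φ (a+b)) = -φ (φ a) + -φ (φ b); simp [map_add]; abel
  have hmsmul : ∀ (c : ℝ) a, hMap φ (c • a) = c • hMap φ a := by
    intro c a; show -φ (φ (c • a)) = c • -φ (φ a); simp [map_smul]
  -- inner product lemmas
  have hinξφ : ∀ y : V, (⟪ξ, φ y⟫ : ℝ) = 0 := by
    intro y; rw [real_inner_comm, ← hηinner, hetaphi]
  have hinner_h : ∀ x y : V, (⟪hMap φ x, hMap φ y⟫ : ℝ) = ⟪x, y⟫ - η x * η y := by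
    intro x y
    rw [hmdef x, hmdef y, hηinner x, hηinner y]
    simp only [inner_sub_left, inner_sub_right, real_inner_smul_left, real_inner_smul_right,
      hxixi]
    rw [real_inner_comm ξ y]
    ring
  have hinφ2 : ∀ x y : V, (⟪x, φ (φ y)⟫ : ℝ) = -(⟪x, y⟫ - η x * η y) := by
    intro x y
    rw [hphi2 y]
    simp [inner_add_right, real_inner_smul_right]
    rw [← hηinner x]; ring
  have hinhφ : ∀ x y : V, (⟪hMap φ x, φ y⟫ : ℝ) = ⟪x, φ y⟫ := by
    intro x y
    rw [hmdef x]
    simp [inner_sub_left, real_inner_smul_left, hinξφ]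
  -- fTr lemmas
  have fξ : fTr e F ξ = 0 := Finset.sum_eq_zero fun i _ => hFlast _ _
  have f0 : fTr e F (0:V) = 0 := Finset.sum_eq_zero fun i _ => l3zero _ _
  have fadd : ∀ a b, fTr e F (a + b) = fTr e F a + fTr e F b := by
    intro a b
    unfold fTr
    rw [← Finset.sum_add_distrib]
    exact Finset.sum_congr rfl fun i _ => l3add _ _ _ _
  have fsmul : ∀ (c : ℝ) a, fTr e F (c • a) = c * fTr e F a := by
    intro c a
    unfold fTr
    rw [Finset.mul_sum]
    exact Finset.sum_congr rfl fun i _ => l3smul _ _ _ _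
  have fneg : ∀ a, fTr e F (-a) = -fTr e F a := by
    intro a
    unfold fTr
    rw [← Finset.sum_neg_distrib]
    exact Finset.sum_congr rfl fun i _ => l3neg _ _ _
  have fφ2 : ∀ z, fTr e F (φ (φ z)) = -fTr e F z := by
    intro z
    rw [hphi2 z, fadd, fneg, fsmul, fξ]; ring
  -- ==================== F9 ====================
  have hm9 : MemHF φ ξ η (F9 n φ e F) := by
    have hGξ : ∀ y z, F9 n φ e F ξ y z = 0 := by
      intro y z; simp [F9, hmξ, hinξφ, inner_zero_left]
    have hGmid : ∀ x z, F9 n φ e F x ξ z = 0 := by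
      intro x z; simp [F9, hmξ, fξ, hphixi, f0, inner_zero_right]
    have hGanti : ∀ x y z, F9 n φ e F x y z = -F9 n φ e F x z y := by
      intro x y z; simp only [F9]; ring
    have hGlast : ∀ x y, F9 n φ e F x y ξ = 0 := by
      intro x y; rw [hGanti, hGmid]; ring
    have key : ∀ x y z, F9 n φ e F x (φ y) (φ z) = -F9 n φ e F x y z := by
      intro x y z
      simp only [F9]
      rw [hmφ y, hmφ z, hinhφ x y, hinhφ x z, hinφ2 x y, hinφ2 x z, fφ2 y, fφ2 z,
        hinner_h x y, hinner_h x z]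
      ring
    refine ⟨⟨⟨?_, ?_, ?_⟩, hGanti, ?_⟩, ?_, ?_⟩
    · intro y z
      refine ⟨fun a b => ?_, fun c a => ?_⟩
      · simp only [F9, hmadd, inner_add_left]; ring
      · simp only [F9, hmsmul, real_inner_smul_left, smul_eq_mul]; ring
    · intro x z
      refine ⟨fun a b => ?_, fun c a => ?_⟩
      · simp only [F9, hmadd, inner_add_right, map_add, fadd]; ring
      · simp only [F9, hmsmul, real_inner_smul_right, map_smul, fsmul, smul_eq_mul]; ring
    · intro x y
      refine ⟨fun a b => ?_, fun c a => ?_⟩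
      · simp only [F9, hmadd, inner_add_right, map_add, fadd]; ring
      · simp only [F9, hmsmul, real_inner_smul_right, map_smul, fsmul, smul_eq_mul]; ring
    · intro x y z; rw [key, hGmid, hGlast]; ring
    · funext x y z; simp only [F1, Pi.zero_apply]; rw [hGξ]; ring
    · funext x y z; simp only [F2, Pi.zero_apply]; rw [hGmid, hGmid]; ring
  -- ==================== F10 ====================
  have hm10 : MemHF φ ξ η (F10 φ F) := by
    have hGξ : ∀ y z, F10 φ F ξ y z = 0 := by
      intro y z; simp [F10, hFξ, hphixi, l1zero]
    have hGmid : ∀ x z, F10 φ F x ξ z = 0 := by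
      intro x z; simp [F10, hFmid, hphixi, l2zero]
    have hGanti : ∀ x y z, F10 φ F x y z = -F10 φ F x z y := by
      intro x y z
      have h1 := hB (φ x) y z
      have h2 := hAnti (φ x) y (φ z)
      have h3 := hAnti x y z
      simp only [F10]; linarith
    have hGlast : ∀ x y, F10 φ F x y ξ = 0 := by
      intro x y; rw [hGanti, hGmid]; ring
    have h2' : ∀ x y z, F (φ x) (φ (φ y)) (φ z) = -F (φ x) (φ y) z := by
      intro x y z
      rw [hphi2 y, l2add, l2neg, l2smul, hFmid, ← hB (φ x) y z]
      ring
    have key : ∀ x y z, F10 φ F x (φ y) (φ z) = -F10 φ F x y z := by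
      intro x y z
      simp only [F10]
      rw [hA x y z, h2' x y z]
      ring
    refine ⟨⟨⟨?_, ?_, ?_⟩, hGanti, ?_⟩, ?_, ?_⟩
    · intro y z
      refine ⟨fun a b => ?_, fun c a => ?_⟩
      · simp only [F10, map_add, l1add]; ring
      · simp only [F10, map_smul, l1smul, smul_eq_mul]; ring
    · intro x z
      refine ⟨fun a b => ?_, fun c a => ?_⟩
      · simp only [F10, map_add, l2add]; ring
      · simp only [F10, map_smul, l2smul, smul_eq_mul]; ring
    · intro x y
      refine ⟨fun a b => ?_, fun c a => ?_⟩
      · simp only [F10, l3add]; ring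
      · simp only [F10, l3smul, smul_eq_mul]; ring
    · intro x y z; rw [key, hGmid, hGlast]; ring
    · funext x y z; simp only [F1, Pi.zero_apply]; rw [hGξ]; ring
    · funext x y z; simp only [F2, Pi.zero_apply]; rw [hGmid, hGmid]; ring
  -- ==================== F11 ====================
  have hm11 : MemHF φ ξ η (F11 φ F) := by
    have hGξ : ∀ y z, F11 φ F ξ y z = 0 := by
      intro y z; simp [F11, hFξ, hFmid, hFlast, hphixi, l1zero, l2zero]
    have hGmid : ∀ x z, F11 φ F x ξ z = 0 := by
      intro x z; simp [F11, hFξ, hFmid, hFlast, hphixi, l1zero, l2zero]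
    have hGanti : ∀ x y z, F11 φ F x y z = -F11 φ F x z y := by
      intro x y z
      have a1 := hAnti x y z
      have a2 := hAnti y z x
      have a3 := hAnti z x y
      have p1 := hB (φ x) y z
      have p1' := hAnti (φ x) y (φ z)
      have p2 := hB (φ y) z x
      have p2' := hAnti (φ y) z (φ x)
      have p3 := hB (φ z) x y
      have p3' := hAnti (φ z) x (φ y)
      simp only [F11]; linarith
    have hGlast : ∀ x y, F11 φ F x y ξ = 0 := by
      intro x y; rw [hGanti, hGmid]; ring
    have h2' : ∀ x y z, F (φ x) (φ (φ y)) (φ z) = -F (φ x) (φ y) z := by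
      intro x y z
      rw [hphi2 y, l2add, l2neg, l2smul, hFmid, ← hB (φ x) y z]
      ring
    have key : ∀ x y z, F11 φ F x (φ y) (φ z) = -F11 φ F x y z := by
      intro x y z
      have h1 := hA x y z
      have h3 := (hB (φ z) x y).symm
      have h4 := h2' x y z
      have h5 : F (φ (φ y)) (φ (φ z)) x = F y z x := by
        simp [hphi2 y, hphi2 z, l1add, l1neg, l1smul, l2add, l2neg, l2smul, hFξ, hFmid]
      have h6 : F (φ (φ z)) (φ x) (φ y) = F z x y := by
        rw [hphi2 z, l1add, l1neg, l1smul, hFξ, hA z x y]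
        ring
      simp only [F11]
      rw [h1, h4, h5, h6, h3]
      ring
    refine ⟨⟨⟨?_, ?_, ?_⟩, hGanti, ?_⟩, ?_, ?_⟩
    · intro y z
      refine ⟨fun a b => ?_, fun c a => ?_⟩
      · simp only [F11, map_add, l1add, l2add, l3add]; ring
      · simp only [F11, map_smul, l1smul, l2smul, l3smul, smul_eq_mul]; ring
    · intro x z
      refine ⟨fun a b => ?_, fun c a => ?_⟩
      · simp only [F11, map_add, l1add, l2add, l3add]; ring
      · simp only [F11, map_smul, l1smul, l2smul, l3smul, smul_eq_mul]; ring
    · intro x y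
      refine ⟨fun a b => ?_, fun c a => ?_⟩
      · simp only [F11, map_add, l1add, l2add, l3add]; ring
      · simp only [F11, map_smul, l1smul, l2smul, l3smul, smul_eq_mul]; ring
    · intro x y z; rw [key, hGmid, hGlast]; ring
    · funext x y z; simp only [F1, Pi.zero_apply]; rw [hGξ]; ring
    · funext x y z; simp only [F2, Pi.zero_apply]; rw [hGmid, hGmid]; ring
  -- ==================== F12 ====================
  have hm12 : MemHF φ ξ η (F12 φ F) := by
    have hGξ : ∀ y z, F12 φ F ξ y z = 0 := by
      intro y z; simp [F12, hFξ, hphixi, l1zero]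
    have hGmid : ∀ x z, F12 φ F x ξ z = 0 := by
      intro x z; simp [F12, hFmid, hphixi, l2zero]
    have hGanti : ∀ x y z, F12 φ F x y z = -F12 φ F x z y := by
      intro x y z
      have h1 := hB (φ x) y z
      have h2 := hAnti (φ x) y (φ z)
      have h3 := hAnti x y z
      simp only [F12]; linarith
    have hGlast : ∀ x y, F12 φ F x y ξ = 0 := by
      intro x y; rw [hGanti, hGmid]; ring
    have h2' : ∀ x y z, F (φ x) (φ (φ y)) (φ z) = -F (φ x) (φ y) z := by
      intro x y z
      rw [hphi2 y, l2add, l2neg, l2smul, hFmid, ← hB (φ x) y z]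
      ring
    have key : ∀ x y z, F12 φ F x (φ y) (φ z) = -F12 φ F x y z := by
      intro x y z
      simp only [F12]
      rw [hA x y z, h2' x y z]
      ring
    refine ⟨⟨⟨?_, ?_, ?_⟩, hGanti, ?_⟩, ?_, ?_⟩
    · intro y z
      refine ⟨fun a b => ?_, fun c a => ?_⟩
      · simp only [F12, map_add, l1add]; ring
      · simp only [F12, map_smul, l1smul, smul_eq_mul]; ring
    · intro x z
      refine ⟨fun a b => ?_, fun c a => ?_⟩
      · simp only [F12, map_add, l2add]; ring
      · simp only [F12, map_smul, l2smul, smul_eq_mul]; ring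
    · intro x y
      refine ⟨fun a b => ?_, fun c a => ?_⟩
      · simp only [F12, l3add]; ring
      · simp only [F12, l3smul, smul_eq_mul]; ring
    · intro x y z; rw [key, hGmid, hGlast]; ring
    · funext x y z; simp only [F1, Pi.zero_apply]; rw [hGξ]; ring
    · funext x y z; simp only [F2, Pi.zero_apply]; rw [hGmid, hGmid]; ring
  exact ⟨hm9, hm10, hm11, hm12⟩
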